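/- Let A be a diagonal n×n real matrix with diagonal vector λ, and let 1 ≤ m ≤ n. Viewing E_m as a polynomial function of the n² matrix entries, the following hold at A: ∂E_m/∂A_{ii} = σ_{m−1}(λ|i) for each i; ∂E_m/∂A_{ij} = 0 for i ≠ j; ∂²E_m/∂A_{ii}∂A_{jj} = σ_{m−2}(λ|ij) for i ≠ j; ∂²E_m/∂A_{ij}∂A_{ji} = −σ_{m−2}(λ|ij) for i ≠ j; and all other second partial derivatives ∂²E_m/∂A_{ij}∂A_{pq} vanish at A. -/

import Mathlib

/-- The `k`-th elementary symmetric function of `x` restricted to the index set `s`. -/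
noncomputable def sigmaEOn {ι : Type*} [DecidableEq ι] (s : Finset ι) (k : ℕ) (x : ι → ℝ) : ℝ :=
  ∑ t ∈ s.powersetCard k, ∏ i ∈ t, x i

/-- The `k`-th elementary symmetric function `σ_k(x)`. -/
noncomputable def sigmaE {ι : Type*} [Fintype ι] [DecidableEq ι] (k : ℕ) (x : ι → ℝ) : ℝ :=
  sigmaEOn Finset.univ k x

/-- The Gårding cone `Γ_k ⊆ ℝ^n`. -/
def gardingCone (n k : ℕ) : Set (Fin n → ℝ) :=
  {lam | ∀ j : ℕ, 1 ≤ j → j ≤ k → 0 < sigmaE j lam}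

/-- Elementary symmetric function with integer index: `σ_j = 0` for `j < 0`. -/
noncomputable def sigmaEIntOn {ι : Type*} [DecidableEq ι] (s : Finset ι) (k : ℤ) (x : ι → ℝ) : ℝ :=
  if 0 ≤ k then sigmaEOn s k.toNat x else 0

noncomputable def sigmaEInt {ι : Type*} [Fintype ι] [DecidableEq ι] (k : ℤ) (x : ι → ℝ) : ℝ :=
  sigmaEIntOn Finset.univ k x

/-- `E_j(M)`: the sum of all principal `j × j` minors of `M`, i.e. the `j`-th
elementary symmetric function of the eigenvalues of `M`. -/
noncomputable def Ematrix {ι : Type*} [Fintype ι] [DecidableEq ι] (j : ℕ) (M : Matrix ι ι ℝ) : ℝ :=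
  ∑ s ∈ Finset.univ.powersetCard j,
    Matrix.det (M.submatrix (Subtype.val : {x // x ∈ s} → ι) (Subtype.val : {x // x ∈ s} → ι))

/-- `E_m` viewed as a (polynomial) function of the `n²` matrix entries. -/
noncomputable def Efun (n m : ℕ) (a : Fin n → Fin n → ℝ) : ℝ :=
  Ematrix m (Matrix.of a)

/-- The diagonal matrix with diagonal vector `λ`, as a function of two indices. -/
def diagFun (n : ℕ) (lam : Fin n → ℝ) : Fin n → Fin n → ℝ :=
  fun i j => if i = j then lam i else 0

open Finset

noncomputable def entryCLM (n : ℕ) (i j : Fin n) : (Fin n → Fin n → ℝ) →L[ℝ] ℝ :=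
  (ContinuousLinearMap.proj (R := ℝ) (φ := fun _ : Fin n => ℝ) j).comp
    (ContinuousLinearMap.proj (R := ℝ) (φ := fun _ : Fin n => Fin n → ℝ) i)

lemma entryCLM_apply (n : ℕ) (i j : Fin n) (B : Fin n → Fin n → ℝ) : entryCLM n i j B = B i j := rfl

lemma hasFDerivAt_mono {κ : Type*} [DecidableEq κ] (n : ℕ) (t : Finset κ) (r c : κ → Fin n)
    (B : Fin n → Fin n → ℝ) :
    HasFDerivAt (fun A : Fin n → Fin n → ℝ => ∏ l ∈ t, A (r l) (c l))
      (∑ k ∈ t, (∏ l ∈ t.erase k, B (r l) (c l)) • entryCLM n (r k) (c k)) B :=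
  HasFDerivAt.finset_prod fun k _ =>
    ((entryCLM n (r k) (c k)).hasFDerivAt :
      HasFDerivAt (fun A : Fin n → Fin n → ℝ => A (r k) (c k)) _ B)

lemma Efun_eq (n m : ℕ) :
    Efun n m = fun a => ∑ s ∈ Finset.univ.powersetCard m, ∑ σ : Equiv.Perm {x // x ∈ s},
      (Equiv.Perm.sign σ : ℝ) * ∏ l : {x // x ∈ s}, a (σ l).1 l.1 := by
  funext a
  unfold Efun Ematrix
  refine Finset.sum_congr rfl fun s _ => ?_
  rw [Matrix.det_apply]
  simp [Units.smul_def, zsmul_eq_mul]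

noncomputable def DE (n m : ℕ) (B : Fin n → Fin n → ℝ) : (Fin n → Fin n → ℝ) →L[ℝ] ℝ :=
  ∑ s ∈ Finset.univ.powersetCard m, ∑ σ : Equiv.Perm {x // x ∈ s},
    (Equiv.Perm.sign σ : ℝ) • ∑ k : {x // x ∈ s},
      (∏ l ∈ Finset.univ.erase k, B (σ l).1 l.1) • entryCLM n (σ k).1 k.1

lemma hasFDerivAt_Efun (n m : ℕ) (B : Fin n → Fin n → ℝ) :
    HasFDerivAt (Efun n m) (DE n m B) B := by
  rw [Efun_eq]
  unfold DE
  apply HasFDerivAt.fun_sum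
  intro s _
  apply HasFDerivAt.fun_sum
  intro σ _
  exact (hasFDerivAt_mono n Finset.univ (fun l => (σ l).1) (fun l => l.1) B).const_mul _

lemma DE_apply (n m : ℕ) (B v : Fin n → Fin n → ℝ) :
    DE n m B v = ∑ s ∈ Finset.univ.powersetCard m, ∑ σ : Equiv.Perm {x // x ∈ s},
      (Equiv.Perm.sign σ : ℝ) * ∑ k : {x // x ∈ s},
        (∏ l ∈ Finset.univ.erase k, B (σ l).1 l.1) * v (σ k).1 k.1 := by
  simp [DE, entryCLM_apply, smul_eq_mul]

lemma fderiv_Efun (n m : ℕ) (B : Fin n → Fin n → ℝ) : fderiv ℝ (Efun n m) B = DE n m B :=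
  (hasFDerivAt_Efun n m B).fderiv

lemma perm_eq_one_of_fixes {κ : Type*} (σ : Equiv.Perm κ) (k : κ)
    (h : ∀ l, l ≠ k → σ l = l) : σ = 1 := by
  have hk : σ k = k := by
    by_contra hkk
    have h2 : σ (σ k) = σ k := h (σ k) hkk
    exact hkk (σ.injective h2)
  ext l
  by_cases hl : l = k
  · simp [hl, hk]
  · simp [h l hl]

lemma perm_eq_one_or_swap {κ : Type*} [DecidableEq κ] (σ : Equiv.Perm κ) (k k' : κ)
    (hkk' : k ≠ k') (h : ∀ l, l ≠ k → l ≠ k' → σ l = l) :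
    σ = 1 ∨ σ = Equiv.swap k k' := by
  have hmem : ∀ x : κ, x = k ∨ x = k' → σ x = k ∨ σ x = k' := by
    intro x _
    by_contra hc
    push_neg at hc
    have := h (σ x) hc.1 hc.2
    have hx : σ x = x := σ.injective this
    rcases ‹x = k ∨ x = k'› with rfl | rfl
    · exact hc.1 hx
    · exact hc.2 hx
  rcases hmem k (Or.inl rfl) with h1 | h1
  · left
    have h2 : σ k' = k' := by
      rcases hmem k' (Or.inr rfl) with h2 | h2
      · exact absurd (σ.injective (h1.trans h2.symm)) hkk'
      · exact h2
    ext l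
    by_cases hl : l = k
    · simp [hl, h1]
    by_cases hl' : l = k'
    · simp [hl', h2]
    · simp [h l hl hl']
  · right
    have h2 : σ k' = k := by
      rcases hmem k' (Or.inr rfl) with h2 | h2
      · exact h2
      · exact absurd (σ.injective (h1.trans h2.symm)) hkk'
    ext l
    by_cases hl : l = k
    · simp [hl, h1, Equiv.swap_apply_left]
    by_cases hl' : l = k'
    · simp [hl', h2, Equiv.swap_apply_right]
    · simp [h l hl hl', Equiv.swap_apply_of_ne_of_ne hl hl']

lemma key0 {ι : Type*} [DecidableEq ι] (u : Finset ι) (i : ι) (hi : i ∈ u) (k : ℕ)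
    (g : Finset ι → ℝ) :
    ∑ s ∈ u.powersetCard (k + 1), (if i ∈ s then g (s.erase i) else 0)
      = ∑ t ∈ (u.erase i).powersetCard k, g t := by
  rw [← Finset.sum_filter]
  refine Finset.sum_nbij' (fun s => s.erase i) (fun t => insert i t) ?_ ?_ ?_ ?_ ?_
  · intro s hs
    simp only [Finset.mem_filter, Finset.mem_powersetCard] at hs
    rw [Finset.mem_powersetCard]
    refine ⟨fun x hx => ?_, ?_⟩
    · rw [Finset.mem_erase] at hx ⊢
      exact ⟨hx.1, hs.1.1 hx.2⟩
    · rw [Finset.card_erase_of_mem hs.2, hs.1.2]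
      rfl
  · intro t ht
    rw [Finset.mem_powersetCard] at ht
    simp only [Finset.mem_filter, Finset.mem_powersetCard]
    have hit : i ∉ t := fun h => (Finset.mem_erase.mp (ht.1 h)).1 rfl
    refine ⟨⟨?_, ?_⟩, Finset.mem_insert_self i t⟩
    · intro x hx
      rcases Finset.mem_insert.mp hx with rfl | hx
      · exact hi
      · exact (Finset.mem_erase.mp (ht.1 hx)).2
    · rw [Finset.card_insert_of_notMem hit, ht.2]
  · intro s hs
    simp only [Finset.mem_filter] at hs
    exact Finset.insert_erase hs.2
  · intro t ht
    rw [Finset.mem_powersetCard] at ht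
    have hit : i ∉ t := fun h => (Finset.mem_erase.mp (ht.1 h)).1 rfl
    exact Finset.erase_insert hit
  · intro s _
    rfl

lemma sum_subtype_val {ι : Type*} [DecidableEq ι] (s : Finset ι) (t : Finset {x // x ∈ s})
    (g : ι → ℝ) : ∑ k ∈ t, g k.1 = ∑ x ∈ t.image Subtype.val, g x :=
  (Finset.sum_image (fun _ _ _ _ h => Subtype.val_injective h)).symm

lemma prod_subtype_val {ι : Type*} [DecidableEq ι] (s : Finset ι) (t : Finset {x // x ∈ s})
    (g : ι → ℝ) : ∏ k ∈ t, g k.1 = ∏ x ∈ t.image Subtype.val, g x :=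
  (Finset.prod_image (fun _ _ _ _ h => Subtype.val_injective h)).symm

lemma image_univ_val {ι : Type*} [DecidableEq ι] (s : Finset ι) :
    (Finset.univ : Finset {x // x ∈ s}).image Subtype.val = s := by
  rw [Finset.univ_eq_attach, Finset.attach_image_val]

lemma image_erase_val {ι : Type*} [DecidableEq ι] (s : Finset ι) (k : {x // x ∈ s}) :
    ((Finset.univ : Finset {x // x ∈ s}).erase k).image Subtype.val = s.erase k.1 := by
  rw [Finset.image_erase Subtype.val_injective, image_univ_val]

lemma image_erase_erase_val {ι : Type*} [DecidableEq ι] (s : Finset ι)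
    (k k' : {x // x ∈ s}) :
    (((Finset.univ : Finset {x // x ∈ s}).erase k).erase k').image Subtype.val
      = (s.erase k.1).erase k'.1 := by
  rw [Finset.image_erase Subtype.val_injective, image_erase_val]

lemma prod_erase_zero_of_ne_one {n : ℕ} (lam : Fin n → ℝ) (s : Finset (Fin n))
    (σ : Equiv.Perm {x // x ∈ s}) (hσ : σ ≠ 1) (k : {x // x ∈ s}) :
    (∏ l ∈ Finset.univ.erase k, diagFun n lam (σ l).1 l.1) = 0 := by
  have h : ¬ ∀ l, l ≠ k → σ l = l := fun h => hσ (perm_eq_one_of_fixes σ k h)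
  push_neg at h
  obtain ⟨l, hlk, hl⟩ := h
  refine Finset.prod_eq_zero (Finset.mem_erase.mpr ⟨hlk, Finset.mem_univ l⟩) ?_
  have hne : ((σ l : Fin n)) ≠ (l : Fin n) := fun h => hl (Subtype.coe_injective h)
  exact if_neg hne

lemma single_entry {n : ℕ} (i j x y : Fin n) :
    (Pi.single i (Pi.single j 1) : Fin n → Fin n → ℝ) x y = if x = i ∧ y = j then 1 else 0 := by
  by_cases h1 : x = i
  · subst h1
    simp [Pi.single_apply]
  · simp [Pi.single_apply, h1]

lemma DE_diag (n m : ℕ) (lam : Fin n → ℝ) (i j : Fin n) :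
    DE n m (diagFun n lam) (Pi.single i (Pi.single j 1))
      = ∑ s ∈ Finset.univ.powersetCard m,
          (if i ∈ s then (∏ x ∈ s.erase i, lam x) * (if i = j then 1 else 0) else 0) := by
  rw [DE_apply]
  refine Finset.sum_congr rfl fun s _ => ?_
  rw [Finset.sum_eq_single 1]
  rotate_left
  · intro σ _ hσ
    rw [Finset.sum_eq_zero, mul_zero]
    intro k _
    rw [prod_erase_zero_of_ne_one lam s σ hσ k, zero_mul]
  · intro h
    exact absurd (Finset.mem_univ 1) h
  · simp only [Equiv.Perm.sign_one, Units.val_one, Int.cast_one, one_mul, Equiv.Perm.one_apply]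
    have hterm : ∀ k : {x // x ∈ s},
        (∏ l ∈ Finset.univ.erase k, diagFun n lam l.1 l.1)
            * ((Pi.single i (Pi.single j 1) : Fin n → Fin n → ℝ) k.1 k.1)
          = (∏ x ∈ s.erase k.1, lam x) * (if k.1 = i ∧ k.1 = j then 1 else 0) := by
      intro k
      congr 1
      · have : ∀ l : {x // x ∈ s}, diagFun n lam l.1 l.1 = lam l.1 := fun l => if_pos rfl
        rw [Finset.prod_congr rfl (fun l _ => this l), prod_subtype_val s _ lam,
          image_erase_val]
      · rw [single_entry]
    rw [Finset.sum_congr rfl (fun k _ => hterm k), Finset.sum_coe_sort s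
      (fun x => (∏ y ∈ s.erase x, lam y) * (if x = i ∧ x = j then 1 else 0))]
    by_cases hij : i = j
    · subst hij
      simp only [and_self, mul_ite, mul_one, mul_zero]
      rw [Finset.sum_ite_eq' s i (fun x => ∏ y ∈ s.erase x, lam y)]
      by_cases hi : i ∈ s <;> simp [hi]
    · have hz : ∀ x ∈ s, (∏ y ∈ s.erase x, lam y) * (if x = i ∧ x = j then 1 else 0) = 0 := by
        intro x _
        have : ¬ (x = i ∧ x = j) := fun h => hij (h.1.symm.trans h.2)
        simp [this]
      rw [Finset.sum_eq_zero hz]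
      simp [hij]

lemma first_deriv_diag (n m : ℕ) (hm1 : 1 ≤ m) (lam : Fin n → ℝ) (i : Fin n) :
    DE n m (diagFun n lam) (Pi.single i (Pi.single i 1))
      = sigmaEOn (Finset.univ.erase i) (m - 1) lam := by
  rw [DE_diag]
  obtain ⟨k, rfl⟩ : ∃ k, m = k + 1 := ⟨m - 1, (Nat.succ_pred_eq_of_pos hm1).symm⟩
  simp only [eq_self_iff_true, if_true, mul_one]
  rw [key0 Finset.univ i (Finset.mem_univ i) k (fun t => ∏ x ∈ t, lam x)]
  rw [sigmaEOn]
  norm_num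

lemma first_deriv_offdiag (n m : ℕ) (lam : Fin n → ℝ) (i j : Fin n) (hij : i ≠ j) :
    DE n m (diagFun n lam) (Pi.single i (Pi.single j 1)) = 0 := by
  rw [DE_diag]
  refine Finset.sum_eq_zero fun s _ => ?_
  simp [hij]

noncomputable def D2 (n m : ℕ) (w : Fin n → Fin n → ℝ) (B : Fin n → Fin n → ℝ) :
    (Fin n → Fin n → ℝ) →L[ℝ] ℝ :=
  ∑ s ∈ Finset.univ.powersetCard m, ∑ σ : Equiv.Perm {x // x ∈ s},
    (Equiv.Perm.sign σ : ℝ) • ∑ k : {x // x ∈ s},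
      (w (σ k).1 k.1) • ∑ k' ∈ Finset.univ.erase k,
        (∏ l ∈ (Finset.univ.erase k).erase k', B (σ l).1 l.1) • entryCLM n (σ k').1 k'.1

lemma hasFDerivAt_DEw (n m : ℕ) (w B : Fin n → Fin n → ℝ) :
    HasFDerivAt (fun B => DE n m B w) (D2 n m w B) B := by
  have h : (fun B => DE n m B w) = fun B =>
      ∑ s ∈ Finset.univ.powersetCard m, ∑ σ : Equiv.Perm {x // x ∈ s},
        (Equiv.Perm.sign σ : ℝ) * ∑ k : {x // x ∈ s},
          (∏ l ∈ Finset.univ.erase k, B (σ l).1 l.1) * w (σ k).1 k.1 :=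
    funext fun B => DE_apply n m B w
  rw [h]
  unfold D2
  apply HasFDerivAt.fun_sum
  intro s _
  apply HasFDerivAt.fun_sum
  intro σ _
  refine HasFDerivAt.const_mul ?_ _
  apply HasFDerivAt.fun_sum
  intro k _
  exact (hasFDerivAt_mono n (Finset.univ.erase k) (fun l => (σ l).1) (fun l => l.1) B).mul_const _

lemma fderiv2 (n m : ℕ) (w A : Fin n → Fin n → ℝ) :
    fderiv ℝ (fun B => fderiv ℝ (Efun n m) B w) A = D2 n m w A := by
  have h : (fun B => fderiv ℝ (Efun n m) B w) = fun B => DE n m B w :=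
    funext fun B => by rw [fderiv_Efun]
  rw [h]
  exact (hasFDerivAt_DEw n m w A).fderiv

lemma D2_apply (n m : ℕ) (w A v : Fin n → Fin n → ℝ) :
    D2 n m w A v = ∑ s ∈ Finset.univ.powersetCard m, ∑ σ : Equiv.Perm {x // x ∈ s},
      (Equiv.Perm.sign σ : ℝ) * ∑ k : {x // x ∈ s}, w (σ k).1 k.1 *
        ∑ k' ∈ Finset.univ.erase k,
          (∏ l ∈ (Finset.univ.erase k).erase k', A (σ l).1 l.1) * v (σ k').1 k'.1 := by
  simp [D2, entryCLM_apply, smul_eq_mul, Finset.mul_sum]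

lemma prod_diag_subtype (n : ℕ) (lam : Fin n → ℝ) (s : Finset (Fin n))
    (t : Finset {x // x ∈ s}) :
    ∏ l ∈ t, diagFun n lam l.1 l.1 = ∏ x ∈ t.image Subtype.val, lam x := by
  rw [← prod_subtype_val]
  exact Finset.prod_congr rfl fun l _ => if_pos rfl

lemma sigma_sum_eval (n m : ℕ) (lam : Fin n → ℝ) (s : Finset (Fin n)) (a b p q : Fin n)
    (k k' : {x // x ∈ s}) (hne : k' ≠ k) :
    ∑ σ : Equiv.Perm {x // x ∈ s}, (Equiv.Perm.sign σ : ℝ) *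
        ((Pi.single p (Pi.single q 1) : Fin n → Fin n → ℝ) (σ k).1 k.1 *
          ((∏ l ∈ (Finset.univ.erase k).erase k', diagFun n lam (σ l).1 l.1) *
            (Pi.single a (Pi.single b 1) : Fin n → Fin n → ℝ) (σ k').1 k'.1))
      = (∏ l ∈ (s.erase k.1).erase k'.1, lam l) *
          ((if k.1 = p ∧ k.1 = q then 1 else 0) * (if k'.1 = a ∧ k'.1 = b then 1 else 0)
            - (if k'.1 = p ∧ k.1 = q then 1 else 0) * (if k.1 = a ∧ k'.1 = b then 1 else 0)) := by
  have hstep : ∑ σ : Equiv.Perm {x // x ∈ s}, (Equiv.Perm.sign σ : ℝ) *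
        ((Pi.single p (Pi.single q 1) : Fin n → Fin n → ℝ) (σ k).1 k.1 *
          ((∏ l ∈ (Finset.univ.erase k).erase k', diagFun n lam (σ l).1 l.1) *
            (Pi.single a (Pi.single b 1) : Fin n → Fin n → ℝ) (σ k').1 k'.1))
      = ∑ σ ∈ ({1, Equiv.swap k k'} : Finset (Equiv.Perm {x // x ∈ s})),
          (Equiv.Perm.sign σ : ℝ) *
        ((Pi.single p (Pi.single q 1) : Fin n → Fin n → ℝ) (σ k).1 k.1 *
          ((∏ l ∈ (Finset.univ.erase k).erase k', diagFun n lam (σ l).1 l.1) *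
            (Pi.single a (Pi.single b 1) : Fin n → Fin n → ℝ) (σ k').1 k'.1)) := by
    refine (Finset.sum_subset (Finset.subset_univ _) ?_).symm
    intro σ _ hσ
    have hex : ¬ ∀ l, l ≠ k → l ≠ k' → σ l = l := by
      intro h
      rcases perm_eq_one_or_swap σ k k' hne.symm h with rfl | rfl
      · exact hσ (Finset.mem_insert_self _ _)
      · exact hσ (Finset.mem_insert.mpr (Or.inr (Finset.mem_singleton_self _)))
    push_neg at hex
    obtain ⟨l, h1, h2, h3⟩ := hex
    have hprod : (∏ l ∈ (Finset.univ.erase k).erase k', diagFun n lam (σ l).1 l.1) = 0 := by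
      refine Finset.prod_eq_zero
        (Finset.mem_erase.mpr ⟨h2, Finset.mem_erase.mpr ⟨h1, Finset.mem_univ l⟩⟩) ?_
      have hne2 : ((σ l : Fin n)) ≠ (l : Fin n) := fun h => h3 (Subtype.coe_injective h)
      exact if_neg hne2
    rw [hprod]
    ring
  rw [hstep]
  have hone : (1 : Equiv.Perm {x // x ∈ s}) ≠ Equiv.swap k k' := by
    intro h
    have h2 := congrArg (fun e : Equiv.Perm {x // x ∈ s} => e k) h
    simp only [Equiv.Perm.one_apply, Equiv.swap_apply_left] at h2
    exact hne h2.symm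
  rw [Finset.sum_pair hone]
  have hprod1 : (∏ l ∈ (Finset.univ.erase k).erase k',
      diagFun n lam ((1 : Equiv.Perm {x // x ∈ s}) l).1 l.1)
        = ∏ l ∈ (s.erase k.1).erase k'.1, lam l := by
    simp only [Equiv.Perm.one_apply]
    rw [prod_diag_subtype, image_erase_erase_val]
  have hprod2 : (∏ l ∈ (Finset.univ.erase k).erase k',
      diagFun n lam ((Equiv.swap k k') l).1 l.1)
        = ∏ l ∈ (s.erase k.1).erase k'.1, lam l := by
    rw [← hprod1]
    refine Finset.prod_congr rfl fun l hl => ?_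
    rw [Finset.mem_erase, Finset.mem_erase] at hl
    rw [Equiv.swap_apply_of_ne_of_ne hl.2.1 hl.1]
    simp
  have hsign : ((Equiv.Perm.sign (Equiv.swap k k') : ℤ) : ℝ) = -1 := by
    rw [Equiv.Perm.sign_swap hne.symm]
    simp
  simp only [Equiv.Perm.one_apply, Equiv.Perm.sign_one, Units.val_one, Int.cast_one, one_mul,
    Equiv.swap_apply_left, Equiv.swap_apply_right, hprod1, hprod2, hsign, single_entry]
  rw [prod_diag_subtype, image_erase_erase_val]
  ring

lemma per_s_eval (n : ℕ) (lam : Fin n → ℝ) (s : Finset (Fin n)) (a b p q : Fin n) :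
    (∑ σ : Equiv.Perm {x // x ∈ s}, (Equiv.Perm.sign σ : ℝ) *
      ∑ k : {x // x ∈ s},
        (Pi.single p (Pi.single q 1) : Fin n → Fin n → ℝ) (σ k).1 k.1 *
          ∑ k' ∈ Finset.univ.erase k,
            (∏ l ∈ (Finset.univ.erase k).erase k', diagFun n lam (σ l).1 l.1) *
              (Pi.single a (Pi.single b 1) : Fin n → Fin n → ℝ) (σ k').1 k'.1)
    = ∑ x ∈ s, ∑ y ∈ s.erase x, (∏ l ∈ (s.erase x).erase y, lam l) *
        ((if x = p ∧ x = q then 1 else 0) * (if y = a ∧ y = b then 1 else 0)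
          - (if y = p ∧ x = q then 1 else 0) * (if x = a ∧ y = b then 1 else 0)) := by
  simp only [Finset.mul_sum]
  rw [Finset.sum_comm]
  have hswap : ∀ k : {x // x ∈ s},
      (∑ σ : Equiv.Perm {x // x ∈ s}, ∑ k' ∈ Finset.univ.erase k,
        (Equiv.Perm.sign σ : ℝ) *
          ((Pi.single p (Pi.single q 1) : Fin n → Fin n → ℝ) (σ k).1 k.1 *
            ((∏ l ∈ (Finset.univ.erase k).erase k', diagFun n lam (σ l).1 l.1) *
              (Pi.single a (Pi.single b 1) : Fin n → Fin n → ℝ) (σ k').1 k'.1)))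
      = ∑ k' ∈ Finset.univ.erase k, ∑ σ : Equiv.Perm {x // x ∈ s},
        (Equiv.Perm.sign σ : ℝ) *
          ((Pi.single p (Pi.single q 1) : Fin n → Fin n → ℝ) (σ k).1 k.1 *
            ((∏ l ∈ (Finset.univ.erase k).erase k', diagFun n lam (σ l).1 l.1) *
              (Pi.single a (Pi.single b 1) : Fin n → Fin n → ℝ) (σ k').1 k'.1)) :=
    fun k => Finset.sum_comm
  calc ∑ k : {x // x ∈ s}, ∑ σ : Equiv.Perm {x // x ∈ s}, ∑ k' ∈ Finset.univ.erase k,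
        (Equiv.Perm.sign σ : ℝ) *
          ((Pi.single p (Pi.single q 1) : Fin n → Fin n → ℝ) (σ k).1 k.1 *
            ((∏ l ∈ (Finset.univ.erase k).erase k', diagFun n lam (σ l).1 l.1) *
              (Pi.single a (Pi.single b 1) : Fin n → Fin n → ℝ) (σ k').1 k'.1))
      = ∑ k : {x // x ∈ s}, ∑ k' ∈ Finset.univ.erase k,
          (∏ l ∈ (s.erase k.1).erase k'.1, lam l) *
            ((if k.1 = p ∧ k.1 = q then 1 else 0) * (if k'.1 = a ∧ k'.1 = b then 1 else 0)
              - (if k'.1 = p ∧ k.1 = q then 1 else 0) * (if k.1 = a ∧ k'.1 = b then 1 else 0)) := by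
        refine Finset.sum_congr rfl fun k _ => ?_
        rw [hswap k]
        refine Finset.sum_congr rfl fun k' hk' => ?_
        exact sigma_sum_eval n 0 lam s a b p q k k' (Finset.mem_erase.mp hk').1
    _ = ∑ x ∈ s, ∑ y ∈ s.erase x, (∏ l ∈ (s.erase x).erase y, lam l) *
        ((if x = p ∧ x = q then 1 else 0) * (if y = a ∧ y = b then 1 else 0)
          - (if y = p ∧ x = q then 1 else 0) * (if x = a ∧ y = b then 1 else 0)) := by
        have hinner : ∀ k : {x // x ∈ s},
            (∑ k' ∈ Finset.univ.erase k,
              (∏ l ∈ (s.erase k.1).erase k'.1, lam l) *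
                ((if k.1 = p ∧ k.1 = q then 1 else 0) * (if k'.1 = a ∧ k'.1 = b then 1 else 0)
                  - (if k'.1 = p ∧ k.1 = q then 1 else 0) * (if k.1 = a ∧ k'.1 = b then 1 else 0)))
            = ∑ y ∈ s.erase k.1, (∏ l ∈ (s.erase k.1).erase y, lam l) *
                ((if k.1 = p ∧ k.1 = q then 1 else 0) * (if y = a ∧ y = b then 1 else 0)
                  - (if y = p ∧ k.1 = q then 1 else 0) * (if k.1 = a ∧ y = b then 1 else 0)) := by
          intro k
          rw [sum_subtype_val s (Finset.univ.erase k)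
            (fun y => (∏ l ∈ (s.erase k.1).erase y, lam l) *
              ((if k.1 = p ∧ k.1 = q then 1 else 0) * (if y = a ∧ y = b then 1 else 0)
                - (if y = p ∧ k.1 = q then 1 else 0) * (if k.1 = a ∧ y = b then 1 else 0))),
            image_erase_val]
        rw [Finset.sum_congr rfl fun k _ => hinner k]
        exact Finset.sum_coe_sort s (fun x => ∑ y ∈ s.erase x,
          (∏ l ∈ (s.erase x).erase y, lam l) *
            ((if x = p ∧ x = q then 1 else 0) * (if y = a ∧ y = b then 1 else 0)
              - (if y = p ∧ x = q then 1 else 0) * (if x = a ∧ y = b then 1 else 0)))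

lemma double_delta {n : ℕ} (s : Finset (Fin n)) (g : Fin n → Fin n → ℝ) (x0 y0 : Fin n) :
    (∑ x ∈ s, ∑ y ∈ s.erase x, g x y * ((if x = x0 then 1 else 0) * (if y = y0 then 1 else 0)))
      = if x0 ∈ s then (if y0 ∈ s.erase x0 then g x0 y0 else 0) else 0 := by
  have h1 : ∀ x ∈ s, (∑ y ∈ s.erase x,
      g x y * ((if x = x0 then 1 else 0) * (if y = y0 then 1 else 0)))
        = (if x = x0 then 1 else 0) * (if y0 ∈ s.erase x then g x y0 else 0) := by
    intro x _
    by_cases hx : x = x0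
    · subst hx
      simp only [eq_self_iff_true, if_true, one_mul, mul_ite, mul_one, mul_zero]
      exact Finset.sum_ite_eq' (s.erase x) y0 (g x)
    · simp [hx]
  rw [Finset.sum_congr rfl h1]
  simp only [ite_mul, one_mul, zero_mul]
  exact Finset.sum_ite_eq' s x0 (fun x => if y0 ∈ s.erase x then g x y0 else 0)

lemma indic_mul {P Q : Prop} [Decidable P] [Decidable Q] :
    (if P then (1:ℝ) else 0) * (if Q then 1 else 0) = if P ∧ Q then 1 else 0 := by
  by_cases hP : P <;> by_cases hQ : Q <;> simp [hP, hQ]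

lemma sumA {n : ℕ} (s : Finset (Fin n)) (f : Fin n → Fin n → ℝ) (p q a b : Fin n) :
    (∑ x ∈ s, ∑ y ∈ s.erase x, f x y *
        ((if x = p ∧ x = q then 1 else 0) * (if y = a ∧ y = b then 1 else 0)))
      = if p = q ∧ a = b ∧ a ≠ p then
          (if p ∈ s then (if a ∈ s.erase p then f p a else 0) else 0) else 0 := by
  by_cases h1 : p = q
  · by_cases h2 : a = b
    · subst h1; subst h2
      simp only [and_self]
      rw [double_delta s f p a]
      by_cases hap : a = p
      · subst hap
        simp [Finset.mem_erase]
      · simp [hap]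
    · have hz : ∀ x ∈ s, (∑ y ∈ s.erase x, f x y *
          ((if x = p ∧ x = q then 1 else 0) * (if y = a ∧ y = b then 1 else 0))) = 0 := by
        intro x _
        refine Finset.sum_eq_zero fun y _ => ?_
        have hy : ¬ (y = a ∧ y = b) := fun h => h2 (h.1.symm.trans h.2)
        simp [hy]
      rw [Finset.sum_eq_zero hz]
      have hc : ¬ (p = q ∧ a = b ∧ a ≠ p) := fun h => h2 h.2.1
      rw [if_neg hc]
  · have hz : ∀ x ∈ s, (∑ y ∈ s.erase x, f x y *
        ((if x = p ∧ x = q then 1 else 0) * (if y = a ∧ y = b then 1 else 0))) = 0 := by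
      intro x _
      refine Finset.sum_eq_zero fun y _ => ?_
      have hx : ¬ (x = p ∧ x = q) := fun h => h1 (h.1.symm.trans h.2)
      simp [hx]
    rw [Finset.sum_eq_zero hz]
    have hc : ¬ (p = q ∧ a = b ∧ a ≠ p) := fun h => h1 h.1
    rw [if_neg hc]

lemma per_s_value (n : ℕ) (lam : Fin n → ℝ) (s : Finset (Fin n)) (a b p q : Fin n) :
    (∑ x ∈ s, ∑ y ∈ s.erase x, (∏ l ∈ (s.erase x).erase y, lam l) *
        ((if x = p ∧ x = q then 1 else 0) * (if y = a ∧ y = b then 1 else 0)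
          - (if y = p ∧ x = q then 1 else 0) * (if x = a ∧ y = b then 1 else 0)))
    = (if p = q ∧ a = b ∧ a ≠ p then
        (if p ∈ s then (if a ∈ s.erase p then ∏ l ∈ (s.erase p).erase a, lam l else 0) else 0)
        else 0)
      - (if a = q ∧ b = p ∧ a ≠ b then
        (if a ∈ s then (if b ∈ s.erase a then ∏ l ∈ (s.erase a).erase b, lam l else 0) else 0)
        else 0) := by
  simp only [mul_sub, Finset.sum_sub_distrib]
  congr 1
  · exact sumA s (fun x y => ∏ l ∈ (s.erase x).erase y, lam l) p q a b
  · have hsw : ∀ x y : Fin n,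
        (if y = p ∧ x = q then (1:ℝ) else 0) * (if x = a ∧ y = b then 1 else 0)
          = (if x = a ∧ x = q then 1 else 0) * (if y = p ∧ y = b then 1 else 0) := by
      intro x y
      rw [indic_mul, indic_mul]
      exact if_congr (by tauto) rfl rfl
    simp only [hsw]
    rw [sumA s (fun x y => ∏ l ∈ (s.erase x).erase y, lam l) a q p b]
    by_cases hc : a = q ∧ b = p ∧ a ≠ b
    · obtain ⟨hq, hbp, hab⟩ := hc
      subst hbp
      have hc1 : a = q ∧ b = b ∧ b ≠ a := ⟨hq, rfl, fun h => hab h.symm⟩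
      have hc2 : a = q ∧ b = b ∧ a ≠ b := ⟨hq, rfl, hab⟩
      rw [if_pos hc1, if_pos hc2]
    · have hc' : ¬ (a = q ∧ p = b ∧ p ≠ a) := by
        intro h
        exact hc ⟨h.1, h.2.1.symm, fun hh => h.2.2 (h.2.1.trans hh.symm)⟩
      rw [if_neg hc', if_neg hc]

lemma sum_if_if (n m : ℕ) (hm1 : 1 ≤ m) (lam : Fin n → ℝ) (p a : Fin n) (hap : a ≠ p) :
    (∑ s ∈ Finset.univ.powersetCard m, (if p ∈ s then
        (if a ∈ s.erase p then ∏ l ∈ (s.erase p).erase a, lam l else 0) else 0))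
      = sigmaEIntOn ((Finset.univ.erase p).erase a) ((m : ℤ) - 2) lam := by
  obtain ⟨k, rfl⟩ : ∃ k, m = k + 1 := ⟨m - 1, (Nat.succ_pred_eq_of_pos hm1).symm⟩
  rw [key0 Finset.univ p (Finset.mem_univ p) k
    (fun t => if a ∈ t then ∏ l ∈ t.erase a, lam l else 0)]
  cases k with
  | zero =>
    rw [Finset.powersetCard_zero, Finset.sum_singleton]
    rw [sigmaEIntOn, if_neg (by norm_num)]
    simp
  | succ k' =>
    have hmem : a ∈ Finset.univ.erase p := Finset.mem_erase.mpr ⟨hap, Finset.mem_univ a⟩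
    rw [key0 (Finset.univ.erase p) a hmem k' (fun t => ∏ l ∈ t, lam l)]
    have hcast : ((k' + 1 + 1 : ℕ) : ℤ) - 2 = ((k' : ℕ) : ℤ) := by push_cast; ring
    rw [hcast, sigmaEIntOn, if_pos (Int.natCast_nonneg k'), Int.toNat_natCast, sigmaEOn]

lemma erase_erase_comm {n : ℕ} (s : Finset (Fin n)) (x y : Fin n) :
    (s.erase x).erase y = (s.erase y).erase x := by
  ext z
  simp only [Finset.mem_erase]
  tauto

lemma D2_diag (n m : ℕ) (hm1 : 1 ≤ m) (lam : Fin n → ℝ) (a b p q : Fin n) :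
    D2 n m (Pi.single p (Pi.single q 1)) (diagFun n lam) (Pi.single a (Pi.single b 1))
      = (if p = q ∧ a = b ∧ a ≠ p then
            sigmaEIntOn ((Finset.univ.erase p).erase a) ((m : ℤ) - 2) lam else 0)
        - (if a = q ∧ b = p ∧ a ≠ b then
            sigmaEIntOn ((Finset.univ.erase a).erase b) ((m : ℤ) - 2) lam else 0) := by
  rw [D2_apply]
  rw [Finset.sum_congr rfl (fun s _ =>
    (per_s_eval n lam s a b p q).trans (per_s_value n lam s a b p q))]
  rw [Finset.sum_sub_distrib]
  congr 1
  · by_cases hc1 : p = q ∧ a = b ∧ a ≠ p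
    · simp only [if_pos hc1]
      exact sum_if_if n m hm1 lam p a hc1.2.2
    · simp only [if_neg hc1, Finset.sum_const_zero]
  · by_cases hc2 : a = q ∧ b = p ∧ a ≠ b
    · simp only [if_pos hc2]
      exact sum_if_if n m hm1 lam a b (fun h => hc2.2.2 h.symm)
    · simp only [if_neg hc2, Finset.sum_const_zero]


/-- the first and second partial derivatives of `E_m` with respect to
the matrix entries, evaluated at a diagonal matrix `A` with diagonal `λ`. -/
theorem Ematrix_partials_at_diagonal (n m : ℕ) (hm1 : 1 ≤ m) (hmn : m ≤ n)
    (lam : Fin n → ℝ) :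
    (∀ i : Fin n,
        fderiv ℝ (Efun n m) (diagFun n lam) (Pi.single i (Pi.single i 1))
          = sigmaEOn (Finset.univ.erase i) (m - 1) lam) ∧
    (∀ i j : Fin n, i ≠ j →
        fderiv ℝ (Efun n m) (diagFun n lam) (Pi.single i (Pi.single j 1)) = 0) ∧
    (∀ i j : Fin n, i ≠ j →
        fderiv ℝ (fun B : Fin n → Fin n → ℝ =>
            fderiv ℝ (Efun n m) B (Pi.single j (Pi.single j 1)))
          (diagFun n lam) (Pi.single i (Pi.single i 1))
          = sigmaEIntOn ((Finset.univ.erase i).erase j) ((m : ℤ) - 2) lam) ∧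
    (∀ i j : Fin n, i ≠ j →
        fderiv ℝ (fun B : Fin n → Fin n → ℝ =>
            fderiv ℝ (Efun n m) B (Pi.single j (Pi.single i 1)))
          (diagFun n lam) (Pi.single i (Pi.single j 1))
          = -sigmaEIntOn ((Finset.univ.erase i).erase j) ((m : ℤ) - 2) lam) ∧
    (∀ i j p q : Fin n,
        ¬(i = j ∧ p = q ∧ i ≠ p) → ¬(p = j ∧ q = i ∧ i ≠ j) →
        fderiv ℝ (fun B : Fin n → Fin n → ℝ =>
            fderiv ℝ (Efun n m) B (Pi.single p (Pi.single q 1)))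
          (diagFun n lam) (Pi.single i (Pi.single j 1)) = 0) := by
  refine ⟨?_, ?_, ?_, ?_, ?_⟩
  · intro i
    rw [fderiv_Efun]
    exact first_deriv_diag n m hm1 lam i
  · intro i j hij
    rw [fderiv_Efun]
    exact first_deriv_offdiag n m lam i j hij
  · intro i j hij
    rw [fderiv2 n m _ (diagFun n lam)]
    rw [D2_diag n m hm1 lam i i j j]
    rw [if_pos ⟨rfl, rfl, hij⟩, if_neg (fun h => hij h.1), sub_zero, erase_erase_comm]
  · intro i j hij
    rw [fderiv2 n m _ (diagFun n lam)]
    rw [D2_diag n m hm1 lam i j j i]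
    rw [if_neg (fun h => hij h.1.symm), if_pos ⟨rfl, rfl, hij⟩, zero_sub]
  · intro i j p q h1 h2
    rw [fderiv2 n m _ (diagFun n lam)]
    rw [D2_diag n m hm1 lam i j p q]
    rw [if_neg (fun h => h1 ⟨h.2.1, h.1, h.2.2⟩),
      if_neg (fun h => h2 ⟨h.2.1.symm, h.1.symm, h.2.2⟩), sub_zero]
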